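/- Let n ≥ 2, let {β_m}_{m=1}^n and {μ_m}_{m=1}^n be nonincreasing real sequences with {β_m}_{m=1}^n ≽ {μ_m}_{m=1}^n, and let {α_m}_{m=1}^{n−1} be real numbers such that {α_m}_{m=1}^{n−1} ≽ {μ_m}_{m=1}^{n−1} and {α_m}_{m=1}^{n−1} interlaces on {β_m}_{m=1}^{n}. Then for every k = 1,…,n−1 one has A_k ≤ α_k ≤ B_k, where A_k := max{ β_{k+1}, Σ_{m=k}^{n} β_m − Σ_{m=k+1}^{n−1} α_m − μ_n } and B_k := min{ β_k, min_{l=1,…,k} ( Σ_{m=l}^{n−1} μ_m − Σ_{m=l+1}^{k} β_m − Σ_{m=k+1}^{n−1} α_m ) }, with the convention that sums over empty index sets are zero. -/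

import Mathlib

/-- `{a_m}_{m=1}^N` majorizes `{b_m}_{m=1}^N` (sequences indexed `1,…,N`). -/
def Maj (N : ℕ) (a b : ℕ → ℝ) : Prop :=
  (∀ k, 1 ≤ k → k < N →
    ∑ m ∈ Finset.Icc 1 k, b m ≤ ∑ m ∈ Finset.Icc 1 k, a m) ∧
  ∑ m ∈ Finset.Icc 1 N, a m = ∑ m ∈ Finset.Icc 1 N, b m

private lemma ioc_split (f : ℕ → ℝ) {a b c : ℕ} (h1 : a ≤ b) (h2 : b ≤ c) :
    ∑ m ∈ Finset.Ioc a c, f m = ∑ m ∈ Finset.Ioc a b, f m + ∑ m ∈ Finset.Ioc b c, f m :=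
  (Finset.sum_Ioc_consecutive _ h1 h2).symm

private lemma ioc_single (f : ℕ → ℝ) (a : ℕ) :
    ∑ m ∈ Finset.Ioc a (a + 1), f m = f (a + 1) := by
  rw [← Finset.Icc_add_one_left_eq_Ioc, Finset.Icc_self, Finset.sum_singleton]

private lemma ioc_reindex (f : ℕ → ℝ) (a b : ℕ) :
    ∑ m ∈ Finset.Ioc a b, f (m + 1) = ∑ m ∈ Finset.Ioc (a + 1) (b + 1), f m := by
  have : Finset.Ioc (a+1) (b+1) = (Finset.Ioc a b).map ⟨fun m => m + 1, fun x y h => by simpa using h⟩ := by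
    ext x
    simp only [Finset.mem_map, Finset.mem_Ioc, Function.Embedding.coeFn_mk]
    constructor
    · rintro ⟨hx1, hx2⟩
      exact ⟨x - 1, ⟨by omega, by omega⟩, show x - 1 + 1 = x by omega⟩
    · rintro ⟨y, ⟨h1, h2⟩, rfl⟩
      show a + 1 < y + 1 ∧ y + 1 ≤ b + 1
      omega
  rw [this, Finset.sum_map]
  rfl

/-- if `{β_m}_{m=1}^n ≽ {μ_m}_{m=1}^n`, `{α_m}_{m=1}^{n-1} ≽
{μ_m}_{m=1}^{n-1}` and `{α_m}` interlaces on `{β_m}`, then each `α_k` lies in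
`[A_k, B_k]`.  (Here `A_k ≤ α_k` is stated via the binary `max`, and
`α_k ≤ B_k = min{β_k, min_{l=1,…,k} (…)}` is stated as the equivalent
conjunction `α_k ≤ β_k ∧ ∀ l ∈ {1,…,k}, α_k ≤ …`.) -/
theorem eigenstep_bounds_necessary (n : ℕ) (hn : 2 ≤ n) (β μ : ℕ → ℝ)
    (hβ_anti : ∀ m, 1 ≤ m → m + 1 ≤ n → β (m + 1) ≤ β m)
    (hμ_anti : ∀ m, 1 ≤ m → m + 1 ≤ n → μ (m + 1) ≤ μ m)
    (hmajβ : Maj n β μ)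
    (α : ℕ → ℝ)
    (hmajα : Maj (n - 1) α μ)
    (hint : ∀ m, 1 ≤ m → m ≤ n - 1 → β (m + 1) ≤ α m ∧ α m ≤ β m) :
    ∀ k, 1 ≤ k → k ≤ n - 1 →
      (max (β (k + 1))
        (∑ m ∈ Finset.Icc k n, β m - ∑ m ∈ Finset.Icc (k + 1) (n - 1), α m - μ n)
        ≤ α k) ∧
      α k ≤ β k ∧
      (∀ l, 1 ≤ l → l ≤ k →
        α k ≤ ∑ m ∈ Finset.Icc l (n - 1), μ m - ∑ m ∈ Finset.Icc (l + 1) k, β m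
              - ∑ m ∈ Finset.Icc (k + 1) (n - 1), α m) := by
  obtain ⟨N, rfl⟩ : ∃ N, n = N + 1 := ⟨n - 1, by omega⟩
  simp only [Nat.add_sub_cancel] at *
  have hN : 1 ≤ N := by omega
  have hicc : ∀ b : ℕ, Finset.Icc 1 b = Finset.Ioc 0 b := fun b => Finset.Icc_add_one_left_eq_Ioc 0 b
  have hEβ : ∑ m ∈ Finset.Ioc 0 (N + 1), β m = ∑ m ∈ Finset.Ioc 0 (N + 1), μ m := by
    simp only [← hicc]; exact hmajβ.2
  have hEα : ∑ m ∈ Finset.Ioc 0 N, α m = ∑ m ∈ Finset.Ioc 0 N, μ m := by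
    simp only [← hicc]; exact hmajα.2
  have hpre : ∀ i, i ≤ N → ∑ m ∈ Finset.Ioc 0 i, μ m ≤ ∑ m ∈ Finset.Ioc 0 i, α m := by
    intro i hi
    rcases Nat.eq_zero_or_pos i with h | h
    · subst h; simp
    rcases eq_or_lt_of_le hi with h' | h'
    · subst h'; exact le_of_eq hEα.symm
    · have := hmajα.1 i h h'; simpa only [hicc] using this
  intro k hk hkN
  obtain ⟨j, rfl⟩ : ∃ j, k = j + 1 := ⟨k - 1, by omega⟩
  simp only [Finset.Icc_add_one_left_eq_Ioc]
  refine ⟨?_, (hint (j + 1) (by omega) (by omega)).2, ?_⟩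
  · refine max_le (hint (j + 1) (by omega) (by omega)).1 ?_
    have s1 : ∑ m ∈ Finset.Ioc 0 (N + 1), β m
        = ∑ m ∈ Finset.Ioc 0 j, β m + ∑ m ∈ Finset.Ioc j (N + 1), β m :=
      ioc_split β (by omega) (by omega)
    have s2 : ∑ m ∈ Finset.Ioc 0 N, α m
        = ∑ m ∈ Finset.Ioc 0 j, α m + (α (j + 1) + ∑ m ∈ Finset.Ioc (j + 1) N, α m) := by
      rw [ioc_split α (Nat.zero_le j) (by omega : j ≤ N),
        ioc_split α (by omega : j ≤ j + 1) (by omega : j + 1 ≤ N), ioc_single]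
    have s3 : ∑ m ∈ Finset.Ioc 0 (N + 1), μ m
        = ∑ m ∈ Finset.Ioc 0 N, μ m + μ (N + 1) := by
      rw [ioc_split μ (Nat.zero_le N) (by omega : N ≤ N + 1), ioc_single]
    have s4 : ∑ m ∈ Finset.Ioc 0 j, α m ≤ ∑ m ∈ Finset.Ioc 0 j, β m := by
      refine Finset.sum_le_sum fun m hm => ?_
      rw [Finset.mem_Ioc] at hm
      exact (hint m (by omega) (by omega)).2
    linarith
  · intro l hl hlj
    obtain ⟨i, rfl⟩ : ∃ i, l = i + 1 := ⟨l - 1, by omega⟩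
    have hij : i ≤ j := by omega
    simp only [Finset.Icc_add_one_left_eq_Ioc]
    have t1 : ∑ m ∈ Finset.Ioc 0 N, α m
        = ∑ m ∈ Finset.Ioc 0 i, α m
          + (∑ m ∈ Finset.Ioc i j, α m + (α (j + 1) + ∑ m ∈ Finset.Ioc (j + 1) N, α m)) := by
      rw [ioc_split α (Nat.zero_le i) (by omega : i ≤ N),
        ioc_split α (by omega : i ≤ j) (by omega : j ≤ N),
        ioc_split α (by omega : j ≤ j + 1) (by omega : j + 1 ≤ N), ioc_single]
    have t2 : ∑ m ∈ Finset.Ioc 0 N, μ m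
        = ∑ m ∈ Finset.Ioc 0 i, μ m + ∑ m ∈ Finset.Ioc i N, μ m :=
      ioc_split μ (Nat.zero_le i) (by omega)
    have t3 : ∑ m ∈ Finset.Ioc (i + 1) (j + 1), β m ≤ ∑ m ∈ Finset.Ioc i j, α m := by
      rw [← ioc_reindex β i j]
      refine Finset.sum_le_sum fun m hm => ?_
      rw [Finset.mem_Ioc] at hm
      exact (hint m (by omega) (by omega)).1
    have t4 := hpre i (by omega)
    linarith
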